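/- Under the condition q² ≤ ε (and c ≥ 0), one has η^N_t ≥ 0 for every t ≤ T, and η^N_T = c. -/
import Mathlib


/-- The explicit solution `η` of the scalar Riccati equation, as a function of the
parameters `a, q, ε, c`, the horizon `T`, the coefficient `r` (which equals
`1 - 1/N²` for the `N`-player game) and the time `t`. -/
noncomputable def etaAux (a q ε c T r t : ℝ) : ℝ :=
  let R := (a + q) ^ 2 + r * (ε - q ^ 2)
  let dp := -(a + q) + Real.sqrt R
  let dm := -(a + q) - Real.sqrt R
  let e := Real.exp ((dp - dm) * (T - t))
  (-(ε - q ^ 2) * (e - 1) - c * (dp * e - dm)) / ((dm * e - dp) - c * r * (e - 1))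

/-- Under the condition `q² ≤ ε` (and `c ≥ 0`), one has `η^N_t ≥ 0` for every
`t ≤ T`, and `η^N_T = c`. -/
theorem statement_2 (T a q ε c : ℝ) (N : ℕ) (hT : 0 < T) (hN : 1 ≤ N)
    (ha : 0 ≤ a) (hq : 0 ≤ q) (hc : 0 ≤ c) (hε : q ^ 2 ≤ ε)
    (hR : 0 < (a + q) ^ 2 + (1 - 1 / (N : ℝ) ^ 2) * (ε - q ^ 2)) :
    (∀ t ≤ T, 0 ≤ etaAux a q ε c T (1 - 1 / (N : ℝ) ^ 2) t) ∧
    etaAux a q ε c T (1 - 1 / (N : ℝ) ^ 2) T = c := by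
  set r : ℝ := 1 - 1 / (N : ℝ) ^ 2 with hrdef
  have hN1 : (1:ℝ) ≤ (N:ℝ) := by exact_mod_cast hN
  have hN2 : (1:ℝ) ≤ (N:ℝ)^2 := by nlinarith
  have hr : 0 ≤ r := by
    have : 1 / (N:ℝ)^2 ≤ 1 := by
      rw [div_le_one (by positivity)]; exact hN2
    rw [hrdef]; linarith
  have hεq : 0 ≤ ε - q ^ 2 := by linarith
  have haq : 0 ≤ a + q := by linarith
  set R : ℝ := (a + q) ^ 2 + r * (ε - q ^ 2) with hRdef
  have hRpos : 0 < R := hR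
  have hs0 : 0 < Real.sqrt R := Real.sqrt_pos.mpr hRpos
  have hsq : a + q ≤ Real.sqrt R := by
    have h1 : (a+q)^2 ≤ R := by nlinarith [mul_nonneg hr hεq]
    calc a + q = Real.sqrt ((a+q)^2) := (Real.sqrt_sq haq).symm
    _ ≤ Real.sqrt R := Real.sqrt_le_sqrt h1
  set s : ℝ := Real.sqrt R with hsdef
  constructor
  · intro t ht
    simp only [etaAux, ← hRdef, ← hsdef]
    set e : ℝ := Real.exp ((-(a + q) + s - (-(a + q) - s)) * (T - t)) with hedef
    have he1 : 1 ≤ e := by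
      rw [hedef]
      apply Real.one_le_exp
      have : (-(a + q) + s - (-(a + q) - s)) = 2 * s := by ring
      rw [this]
      have : 0 ≤ T - t := by linarith
      positivity
    have he1' : 0 ≤ e - 1 := by linarith
    rw [div_nonneg_iff]
    right
    constructor
    · nlinarith [mul_nonneg hεq he1', mul_nonneg (sub_nonneg.mpr hsq) he1',
        mul_nonneg hc (mul_nonneg (sub_nonneg.mpr hsq) he1'), mul_nonneg hc hs0.le]
    · nlinarith [mul_nonneg haq he1', mul_nonneg (mul_nonneg hc hr) he1',
        mul_nonneg hs0.le he1']
  · simp only [etaAux, ← hRdef, ← hsdef, sub_self, mul_zero, Real.exp_zero]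
    rw [div_eq_iff (by nlinarith)]
    ring
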